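/- arXiv:1605.06572 — 6 statements merged into one kernel-verified Lean document; each statement's English description precedes it below -/
import Mathlib

section
/- Let c be the edge coloring of Q_n defined as follows: for an edge xy with x of weight k and y of weight k+1, with common prefix p (the common initial segment of the binary strings x and y before the position where they differ), set c(xy) = (k mod 2, w(p) mod 2), where w(p) is the number of 1's in p. Then there is no monochromatic 6-cycle in Q_n under c. -/
/-- Hamming weight of a binary string. -/
def wt {n : ℕ} (x : Fin n → Bool) : ℕ := (Finset.univ.filter fun i => x i = true).card

/-- `x` and `y` differ exactly at the coordinate `j`. -/
def diffAt {n : ℕ} (x y : Fin n → Bool) (j : Fin n) : Prop :=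
  x j ≠ y j ∧ ∀ i, i ≠ j → x i = y i

/-- Weight of the prefix of `x` strictly before position `j`. -/
def prefWt {n : ℕ} (x : Fin n → Bool) (j : Fin n) : ℕ :=
  (Finset.univ.filter fun i => i < j ∧ x i = true).card

/-- The coloring `c`: for an edge `xy` differing at position `j`, with lower
endpoint of weight `k` and common prefix `p`, the color is `(k mod 2, w(p) mod 2)`. -/
def edgeColor {n : ℕ} (x y : Fin n → Bool) (j : Fin n) : ℕ × ℕ :=
  if wt x ≤ wt y then (wt x % 2, prefWt x j % 2) else (wt y % 2, prefWt y j % 2)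

lemma wt_flip {n : ℕ} {x y : Fin n → Bool} {t : Fin n} (h1 : x t ≠ y t)
    (h2 : ∀ s, s ≠ t → x s = y s) :
    (x t = false ∧ y t = true ∧ wt y = wt x + 1) ∨
    (y t = false ∧ x t = true ∧ wt x = wt y + 1) := by
  have key : ∀ (u w : Fin n → Bool), u t = false → w t = true → (∀ s, s ≠ t → u s = w s) →
      wt w = wt u + 1 := by
    intro u w hu hw hs
    have hset : (Finset.univ.filter fun i => w i = true) =
        insert t (Finset.univ.filter fun i => u i = true) := by
      ext i
      simp only [Finset.mem_filter, Finset.mem_univ, true_and, Finset.mem_insert]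
      by_cases hi : i = t
      · subst hi; simp [hw]
      · rw [hs i hi]; simp [hi]
    rw [wt, wt, hset, Finset.card_insert_of_notMem (by simp [hu])]
  cases hx : x t <;> cases hy : y t
  · simp [hx, hy] at h1
  · exact Or.inl ⟨rfl, rfl, key x y hx hy h2⟩
  · exact Or.inr ⟨rfl, rfl, key y x hy hx (fun s hs => (h2 s hs).symm)⟩
  · simp [hx, hy] at h1

lemma pref_contra {n : ℕ} {x1 x2 : Fin n → Bool} {a b : Fin n} (hab : a < b)
    (h1 : x1 a = true) (h2 : x2 a = false)
    (hagree : ∀ s, s < b → s ≠ a → x1 s = x2 s)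
    (hmod : prefWt x1 b % 2 = prefWt x2 b % 2) : False := by
  have hset : (Finset.univ.filter fun i => i < b ∧ x1 i = true) =
      insert a (Finset.univ.filter fun i => i < b ∧ x2 i = true) := by
    ext i
    simp only [Finset.mem_filter, Finset.mem_univ, true_and, Finset.mem_insert]
    by_cases hi : i = a
    · subst hi; simp [h1, hab]
    · constructor
      · rintro ⟨hib, hx⟩; exact Or.inr ⟨hib, by rwa [← hagree i hib hi]⟩
      · rintro (h | ⟨hib, hx⟩); · exact absurd h hi
        · exact ⟨hib, by rwa [hagree i hib hi]⟩
  have : prefWt x1 b = prefWt x2 b + 1 := by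
    rw [prefWt, prefWt, hset, Finset.card_insert_of_notMem (by simp [h2])]
  omega

lemma sort3 {α : Type*} [LinearOrder α] (a b c : α) (hab : a ≠ b) (hac : a ≠ c) (hbc : b ≠ c) :
    ∃ a' b' c', a' < b' ∧ b' < c' ∧ ∀ t, (t = a ∨ t = b ∨ t = c) ↔ (t = a' ∨ t = b' ∨ t = c') := by
  rcases lt_trichotomy a b with h1 | h1 | h1
  · rcases lt_trichotomy b c with h2 | h2 | h2
    · exact ⟨a, b, c, h1, h2, by tauto⟩
    · exact absurd h2 hbc
    · rcases lt_trichotomy a c with h3 | h3 | h3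
      · exact ⟨a, c, b, h3, h2, by tauto⟩
      · exact absurd h3 hac
      · exact ⟨c, a, b, h3, h1, by tauto⟩
  · exact absurd h1 hab
  · rcases lt_trichotomy a c with h2 | h2 | h2
    · exact ⟨b, a, c, h1, h2, by tauto⟩
    · exact absurd h2 hac
    · rcases lt_trichotomy b c with h3 | h3 | h3
      · exact ⟨b, c, a, h3, h2, by tauto⟩
      · exact absurd h3 hbc
      · exact ⟨c, b, a, h3, h1, by tauto⟩

/-- There is no monochromatic 6-cycle in `Q_n` under the coloring `c`. -/
theorem stmt2 (n : ℕ) :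
    ¬ ∃ (v : Fin 6 → (Fin n → Bool)) (j : Fin 6 → Fin n),
      Function.Injective v ∧
      (∀ i, diffAt (v i) (v (i + 1)) (j i)) ∧
      (∀ i : Fin 6, edgeColor (v i) (v (i + 1)) (j i) = edgeColor (v 0) (v 1) (j 0)) := by
  rintro ⟨v, j, hinj, hdiff, hcol⟩
  -- per-edge data
  have hE : ∀ i : Fin 6, ∃ k x, (x = v i ∨ x = v (i+1)) ∧ wt x = k ∧ x (j i) = false ∧
      (∀ s, s ≠ j i → x s = v i s) ∧
      edgeColor (v i) (v (i+1)) (j i) = (k % 2, prefWt x (j i) % 2) ∧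
      k ≤ wt (v i) ∧ k ≤ wt (v (i+1)) ∧ wt (v i) ≤ k + 1 ∧ wt (v (i+1)) ≤ k + 1 := by
    intro i
    rcases wt_flip (hdiff i).1 (hdiff i).2 with ⟨hx, hy, hwt⟩ | ⟨hy, hx, hwt⟩
    · refine ⟨wt (v i), v i, Or.inl rfl, rfl, hx, fun s _ => rfl, ?_,
        le_refl _, by omega, by omega, by omega⟩
      rw [edgeColor, if_pos (by omega)]
    · refine ⟨wt (v (i+1)), v (i+1), Or.inr rfl, rfl, hy,
        fun s hs => ((hdiff i).2 s hs).symm, ?_, by omega, le_refl _, by omega, by omega⟩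
      rw [edgeColor, if_neg (by omega)]
  choose k x hmemx hwtx hbitx hagreex hcolx hb1 hb2 hb3 hb4 using hE
  have hc0 : edgeColor (v 0) (v 1) (j 0) = (k 0 % 2, prefWt (x 0) (j 0) % 2) := by
    rw [show (1:Fin 6) = 0 + 1 from by decide]; exact hcolx 0
  have hcols : ∀ i, (k i % 2, prefWt (x i) (j i) % 2) = (k 0 % 2, prefWt (x 0) (j 0) % 2) := by
    intro i; rw [← hcolx i, hcol i, hc0]
  have hk2 : ∀ i, k i % 2 = k 0 % 2 := fun i => congrArg Prod.fst (hcols i)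
  have hp2 : ∀ i, prefWt (x i) (j i) % 2 = prefWt (x 0) (j 0) % 2 :=
    fun i => congrArg Prod.snd (hcols i)
  have hkc : ∀ i : Fin 6, k (i+1) = k i := by
    intro i
    have a1 := hb2 i; have a2 := hb4 i; have a3 := hb1 (i+1); have a4 := hb3 (i+1)
    have a5 := hk2 i; have a6 := hk2 (i+1)
    omega
  have e01 : (1:Fin 6) = 0 + 1 := by decide
  have e12 : (2:Fin 6) = 1 + 1 := by decide
  have e23 : (3:Fin 6) = 2 + 1 := by decide
  have e34 : (4:Fin 6) = 3 + 1 := by decide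
  have e45 : (5:Fin 6) = 4 + 1 := by decide
  have q1 : k 1 = k 0 := by rw [e01]; exact hkc 0
  have q2 : k 2 = k 0 := by rw [e12]; rw [hkc 1]; exact q1
  have q3 : k 3 = k 0 := by rw [e23]; rw [hkc 2]; exact q2
  have q4 : k 4 = k 0 := by rw [e34]; rw [hkc 3]; exact q3
  have q5 : k 5 = k 0 := by rw [e45]; rw [hkc 4]; exact q4
  have hkall : ∀ i : Fin 6, k i = k 0 := by
    intro i; fin_cases i
    exacts [rfl, q1, q2, q3, q4, q5]
  -- vertices agree outside flipped coordinates
  have hout : ∀ t : Fin n, (∀ i, j i ≠ t) → ∀ i : Fin 6, v i t = v 0 t := by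
    intro t ht
    have hstep : ∀ i : Fin 6, v i t = v (i+1) t := fun i => (hdiff i).2 t (fun h => ht i h.symm)
    have g1 : v 1 t = v 0 t := by rw [e01]; exact (hstep 0).symm
    have g2 : v 2 t = v 0 t := by rw [e12]; rw [← hstep 1]; exact g1
    have g3 : v 3 t = v 0 t := by rw [e23]; rw [← hstep 2]; exact g2
    have g4 : v 4 t = v 0 t := by rw [e34]; rw [← hstep 3]; exact g3
    have g5 : v 5 t = v 0 t := by rw [e45]; rw [← hstep 4]; exact g4
    intro i; fin_cases i
    exacts [rfl, g1, g2, g3, g4, g5]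
  -- each coordinate is flipped an even number of times
  have heven : ∀ t : Fin n, 2 ∣ (Finset.univ.filter fun i => j i = t).card := by
    intro t
    set g : Fin 6 → ZMod 2 := fun i => if v i t = true then 1 else 0 with hgdef
    have hg : ∀ i, g (i+1) = g i + (if j i = t then 1 else 0) := by
      intro i
      by_cases h : j i = t
      · have hne := (hdiff i).1
        rw [h] at hne
        simp only [hgdef, if_pos h]
        cases h1 : v i t <;> cases h2 : v (i+1) t
        · exact absurd (h1.trans h2.symm) hne
        · simp
        · simp only [h1, h2]; decide
        · exact absurd (h1.trans h2.symm) hne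
      · have heq : v i t = v (i+1) t := (hdiff i).2 t (fun ht => h ht.symm)
        simp [hgdef, h, heq]
    have hsum : ∑ i, g (i+1) = ∑ i, g i := Fintype.sum_equiv (Equiv.addRight 1) _ _ (fun _ => rfl)
    have hzero : ∑ i : Fin 6, (if j i = t then (1:ZMod 2) else 0) = 0 := by
      have h2 := Finset.sum_congr rfl (fun i (_ : i ∈ Finset.univ) => hg i)
      rw [Finset.sum_add_distrib, hsum] at h2
      exact (left_eq_add.mp h2)
    rw [Finset.sum_boole] at hzero
    exact (ZMod.natCast_eq_zero_iff _ 2).mp hzero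
  set S : Finset (Fin n) := Finset.image j Finset.univ with hSdef
  -- S has at least 3 elements
  have hS3 : 3 ≤ S.card := by
    by_contra hlt
    push_neg at hlt
    have hcov : ∃ a b : Fin n, ∀ i, j i = a ∨ j i = b := by
      by_cases hall : ∀ i, j i = j 0
      · exact ⟨j 0, j 0, fun i => Or.inl (hall i)⟩
      · push_neg at hall
        obtain ⟨i0, hi0⟩ := hall
        refine ⟨j 0, j i0, fun i => ?_⟩
        by_contra hcon
        push_neg at hcon
        have hsub : ({j 0, j i0, j i} : Finset (Fin n)) ⊆ S := by
          intro u hu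
          simp only [Finset.mem_insert, Finset.mem_singleton] at hu
          rcases hu with h|h|h <;> subst h <;>
            exact Finset.mem_image_of_mem j (Finset.mem_univ _)
        have hc3 : ({j 0, j i0, j i} : Finset (Fin n)).card = 3 :=
          Finset.card_eq_three.mpr ⟨j 0, j i0, j i, Ne.symm hi0, Ne.symm hcon.1, Ne.symm hcon.2, rfl⟩
        have := Finset.card_le_card hsub
        omega
    obtain ⟨a, b, hcov⟩ := hcov
    have hvinj : Function.Injective (fun i : Fin 6 => (v i a, v i b)) := by
      intro i i' hii
      simp only [Prod.mk.injEq] at hii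
      apply hinj
      funext t
      by_cases hta : t = a; · subst hta; exact hii.1
      by_cases htb : t = b; · subst htb; exact hii.2
      have htj : ∀ i'', j i'' ≠ t := by
        intro i'' h
        rcases hcov i'' with hh|hh
        · exact hta (h.symm.trans hh)
        · exact htb (h.symm.trans hh)
      rw [hout t htj i, hout t htj i']
    have hcard := Fintype.card_le_of_injective _ hvinj
    simp at hcard
  -- S has at most 3 elements, hence exactly 3
  have hsum6 : (Finset.univ : Finset (Fin 6)).card
      = ∑ t ∈ S, (Finset.univ.filter fun i => j i = t).card :=
    Finset.card_eq_sum_card_fiberwise (fun i _ => Finset.mem_image_of_mem j (Finset.mem_univ i))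
  have hfib : ∀ t ∈ S, 2 ≤ (Finset.univ.filter fun i => j i = t).card := by
    intro t htS
    obtain ⟨i, -, hji⟩ := Finset.mem_image.mp htS
    have h1 : 0 < (Finset.univ.filter fun i => j i = t).card :=
      Finset.card_pos.mpr ⟨i, by simp [hji]⟩
    have := heven t
    omega
  have hle : 2 * S.card ≤ 6 := by
    calc 2 * S.card = ∑ _t ∈ S, 2 := by rw [Finset.sum_const, smul_eq_mul, mul_comm]
    _ ≤ ∑ t ∈ S, (Finset.univ.filter fun i => j i = t).card := Finset.sum_le_sum hfib
    _ = 6 := by rw [← hsum6]; simp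
  have hScard : S.card = 3 := by omega
  obtain ⟨A, B, C, hAB, hAC, hBC, hSeq⟩ := Finset.card_eq_three.mp hScard
  obtain ⟨a, b, c, hab, hbc, hiff⟩ := sort3 A B C hAB hAC hBC
  have hmem : ∀ i : Fin 6, j i = a ∨ j i = b ∨ j i = c := by
    intro i
    have h1 : j i ∈ S := Finset.mem_image_of_mem j (Finset.mem_univ i)
    rw [hSeq] at h1
    simp only [Finset.mem_insert, Finset.mem_singleton] at h1
    exact (hiff (j i)).mp h1
  have hbS : b ∈ S := by
    have h1 : b = A ∨ b = B ∨ b = C := (hiff b).mpr (Or.inr (Or.inl rfl))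
    rw [hSeq]
    simp only [Finset.mem_insert, Finset.mem_singleton]
    exact h1
  obtain ⟨i1, -, hji1⟩ := Finset.mem_image.mp hbS
  have hfb := hfib b hbS
  obtain ⟨i2, hi2mem, hi2ne⟩ := Finset.exists_mem_ne (s := Finset.univ.filter fun i => j i = b) (by omega) i1
  have hji2 : j i2 = b := (Finset.mem_filter.mp hi2mem).2
  have hbit1 : x i1 b = false := by have := hbitx i1; rwa [hji1] at this
  have hbit2 : x i2 b = false := by have := hbitx i2; rwa [hji2] at this
  -- the two lower endpoints are distinct
  have hx12 : x i1 ≠ x i2 := by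
    intro heq
    set F : Fin n → Bool := fun s => if s = b then true else x i1 s with hFdef
    have hpair : ∀ i0, j i0 = b → x i0 = x i1 →
        (v i0 = x i1 ∨ v i0 = F) ∧ (v (i0+1) = x i1 ∨ v (i0+1) = F) := by
      intro i0 hj0 hx0
      have hd := hdiff i0
      rcases hmemx i0 with h | h
      · have hv0 : v i0 = x i1 := by rw [← h, hx0]
        have hv1 : v (i0+1) = F := by
          funext s
          by_cases hs : s = b
          · have hne := hd.1
            rw [hj0] at hne
            have hb0 : v i0 b = false := by rw [hv0]; exact hbit1
            have hu : v (i0+1) b = true := by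
              cases hvb : v (i0+1) b
              · exact absurd (hb0.trans hvb.symm) hne
              · rfl
            rw [hs]; simpa [hFdef] using hu
          · have heqs : v i0 s = v (i0+1) s := hd.2 s (by rw [hj0]; exact hs)
            rw [← heqs, hv0]; simp [hFdef, hs]
        exact ⟨Or.inl hv0, Or.inr hv1⟩
      · have hv1 : v (i0+1) = x i1 := by rw [← h, hx0]
        have hv0 : v i0 = F := by
          funext s
          by_cases hs : s = b
          · have hne := hd.1
            rw [hj0] at hne
            have hb0 : v (i0+1) b = false := by rw [hv1]; exact hbit1
            have hu : v i0 b = true := by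
              cases hvb : v i0 b
              · exact absurd (hvb.trans hb0.symm) hne
              · rfl
            rw [hs]; simpa [hFdef] using hu
          · have heqs : v i0 s = v (i0+1) s := hd.2 s (by rw [hj0]; exact hs)
            rw [heqs, hv1]; simp [hFdef, hs]
        exact ⟨Or.inr hv0, Or.inl hv1⟩
    obtain ⟨h10, h11⟩ := hpair i1 hji1 rfl
    obtain ⟨h20, h21⟩ := hpair i2 hji2 heq.symm
    have dne1 : ∀ p : Fin 6, p + 1 ≠ p := by decide
    have dne2 : ∀ p : Fin 6, (p + 1) + 1 ≠ p := by decide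
    rcases h10 with h10 | h10 <;> rcases h20 with h20 | h20
    · exact hi2ne (hinj (h20.trans h10.symm))
    · rcases h11 with h11 | h11
      · exact dne1 i1 (hinj (h11.trans h10.symm))
      · have e1 : i1 + 1 = i2 := hinj (h11.trans h20.symm)
        rcases h21 with h21 | h21
        · have e2 : i2 + 1 = i1 := hinj (h21.trans h10.symm)
          rw [← e1] at e2
          exact dne2 i1 e2
        · exact dne1 i2 (hinj (h21.trans h20.symm))
    · rcases h11 with h11 | h11
      · have e1 : i1 + 1 = i2 := hinj (h11.trans h20.symm)
        rcases h21 with h21 | h21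
        · exact dne1 i2 (hinj (h21.trans h20.symm))
        · have e2 : i2 + 1 = i1 := hinj (h21.trans h10.symm)
          rw [← e1] at e2
          exact dne2 i1 e2
      · exact dne1 i1 (hinj (h11.trans h10.symm))
    · exact hi2ne (hinj (h20.trans h10.symm))
  -- the lower endpoints agree outside {a, c}
  have hagree_out : ∀ t, t ≠ a → t ≠ c → x i1 t = x i2 t := by
    intro t hta htc
    by_cases htb : t = b
    · subst htb; rw [hbit1, hbit2]
    · have htj : ∀ i, j i ≠ t := by
        intro i h
        rcases hmem i with hh|hh|hh
        · exact hta (h.symm.trans hh)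
        · exact htb (h.symm.trans hh)
        · exact htc (h.symm.trans hh)
      have e1 : x i1 t = v i1 t := hagreex i1 t (by rw [hji1]; exact htb)
      have e2 : x i2 t = v i2 t := hagreex i2 t (by rw [hji2]; exact htb)
      rw [e1, e2, hout t htj i1, hout t htj i2]
  have hwteq : wt (x i1) = wt (x i2) := by
    rw [hwtx i1, hwtx i2, hkall i1, hkall i2]
  -- they differ at a
  have hda : x i1 a ≠ x i2 a := by
    intro hA
    obtain ⟨t, ht⟩ := Function.ne_iff.mp hx12
    have htc : t = c := by
      by_cases h1 : t = a; · rw [h1] at ht; exact absurd hA ht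
      by_cases h2 : t = c; · exact h2
      exact absurd (hagree_out t h1 h2) ht
    have hex : ∀ s, s ≠ t → x i1 s = x i2 s := by
      intro s hs
      by_cases h1 : s = a; · rw [h1]; exact hA
      exact hagree_out s h1 (fun h => hs (h.trans htc.symm))
    rcases wt_flip ht hex with ⟨-, -, h⟩ | ⟨-, -, h⟩ <;> omega
  -- agreement below b except at a
  have hagree_b : ∀ s, s < b → s ≠ a → x i1 s = x i2 s := by
    intro s hsb hsa
    refine hagree_out s hsa ?_
    intro h
    subst h
    exact absurd (hsb.trans hbc) (lt_irrefl _)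
  have hmod : prefWt (x i1) b % 2 = prefWt (x i2) b % 2 := by
    have h1 := hp2 i1
    have h2 := hp2 i2
    rw [hji1] at h1
    rw [hji2] at h2
    rw [h1, h2]
  cases h1a : x i1 a
  · have h2a : x i2 a = true := by
      cases h2a : x i2 a
      · exact absurd (h1a.trans h2a.symm) hda
      · rfl
    exact pref_contra hab h2a h1a (fun s hs hsa => (hagree_b s hs hsa).symm) hmod.symm
  · have h2a : x i2 a = false := by
      cases h2a : x i2 a
      · rfl
      · exact absurd (h1a.trans h2a.symm) hda
    exact pref_contra hab h1a h2a hagree_b hmod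
end

section
/- Let C = x_1, y_1, x_2, y_2, ..., x_5, y_5, x_1 be a 10-cycle in Q_n alternating between levels k and k+1, with y_i = x_i ∪ x_{i+1} (indices mod 5). Let I(C) be the set of coordinates in which x_i and x_{i+1} differ for some i. Then |I(C)| ≠ 4. -/
/-- For a 10-cycle `x₁,y₁,…,x₅,y₅` in `Q_n` alternating between levels `k` and
`k+1` with `yᵢ = xᵢ ∪ xᵢ₊₁`, the set `I(C)` of coordinates in which some two
consecutive `xᵢ` differ does not have exactly 4 elements. -/
theorem stmt6 (n k : ℕ) (x y : ZMod 5 → Finset (Fin n))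
    (hxinj : Function.Injective x)
    (hxcard : ∀ i, (x i).card = k)
    (hy : ∀ i, y i = x i ∪ x (i + 1))
    (hycard : ∀ i, (y i).card = k + 1)
    (hyinj : Function.Injective y) :
    {a : Fin n | ∃ i : ZMod 5,
        (a ∈ x i ∧ a ∉ x (i + 1)) ∨ (a ∉ x i ∧ a ∈ x (i + 1))}.ncard ≠ 4 := by
  intro h4
  classical
  set I : Finset (Fin n) := Finset.univ.filter (fun a => ∃ i : ZMod 5,
      (a ∈ x i ∧ a ∉ x (i + 1)) ∨ (a ∉ x i ∧ a ∈ x (i + 1))) with hI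
  have hset : {a : Fin n | ∃ i : ZMod 5,
        (a ∈ x i ∧ a ∉ x (i + 1)) ∨ (a ∉ x i ∧ a ∈ x (i + 1))} = ↑I := by
    ext a; simp [hI]
  have hIcard : I.card = 4 := by
    rw [hset, Set.ncard_coe_finset] at h4; exact h4
  -- outside I, membership is the same in all x i
  have hconst : ∀ a : Fin n, a ∉ I → ∀ i : ZMod 5, (a ∈ x i ↔ a ∈ x 0) := by
    intro a ha
    simp only [hI, Finset.mem_filter, Finset.mem_univ, true_and, not_exists] at ha
    have step : ∀ i : ZMod 5, (a ∈ x (i + 1) ↔ a ∈ x i) := by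
      intro i; have := ha i; tauto
    have s0 := step 0
    have s1 := step 1
    have s2 := step 2
    have s3 := step 3
    have e0 : (0 : ZMod 5) + 1 = 1 := by decide
    have e1 : (1 : ZMod 5) + 1 = 2 := by decide
    have e2 : (2 : ZMod 5) + 1 = 3 := by decide
    have e3 : (3 : ZMod 5) + 1 = 4 := by decide
    rw [e0] at s0; rw [e1] at s1; rw [e2] at s2; rw [e3] at s3
    intro i
    fin_cases i <;> tauto
  have hdiff : ∀ i : ZMod 5, x i \ I = x 0 \ I := by
    intro i; ext a
    simp only [Finset.mem_sdiff]
    constructor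
    · rintro ⟨h1, h2⟩; exact ⟨(hconst a h2 i).mp h1, h2⟩
    · rintro ⟨h1, h2⟩; exact ⟨(hconst a h2 i).mpr h1, h2⟩
  have hydiff : ∀ i : ZMod 5, y i \ I = x 0 \ I := by
    intro i; ext a
    simp only [hy, Finset.mem_sdiff, Finset.mem_union]
    constructor
    · rintro ⟨h1 | h1, h2⟩
      · exact ⟨(hconst a h2 i).mp h1, h2⟩
      · exact ⟨(hconst a h2 (i + 1)).mp h1, h2⟩
    · rintro ⟨h1, h2⟩; exact ⟨Or.inl ((hconst a h2 i).mpr h1), h2⟩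
  set m : ℕ := (x 0 ∩ I).card with hm
  set c : ℕ := (x 0 \ I).card with hc
  have hmc : m + c = k := by
    have := Finset.card_inter_add_card_sdiff (x 0) I
    rw [hxcard] at this; exact this
  have hfcard : ∀ i : ZMod 5, (x i ∩ I).card = m := by
    intro i
    have h1 := Finset.card_inter_add_card_sdiff (x i) I
    rw [hdiff i, hxcard, ← hc] at h1
    omega
  have hgcard : ∀ i : ZMod 5, (y i ∩ I).card = m + 1 := by
    intro i
    have h1 := Finset.card_inter_add_card_sdiff (y i) I
    rw [hydiff i, hycard, ← hc] at h1
    omega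
  have key : ∀ s : Finset (Fin n), s ∩ I ∪ s \ I = s := by
    intro s; ext a; simp only [Finset.mem_union, Finset.mem_inter, Finset.mem_sdiff]; tauto
  have hfinj : Function.Injective (fun i : ZMod 5 => x i ∩ I) := by
    intro i j hij
    apply hxinj
    have : x i ∩ I ∪ x i \ I = x j ∩ I ∪ x j \ I := by
      rw [hdiff i, hdiff j]; simp only at hij; rw [hij]
    rwa [key, key] at this
  have hginj : Function.Injective (fun i : ZMod 5 => y i ∩ I) := by
    intro i j hij
    apply hyinj
    have : y i ∩ I ∪ y i \ I = y j ∩ I ∪ y j \ I := by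
      rw [hydiff i, hydiff j]; simp only at hij; rw [hij]
    rwa [key, key] at this
  have h5f : 5 ≤ Nat.choose 4 m := by
    have hle : (Finset.univ : Finset (ZMod 5)).card ≤ (I.powersetCard m).card := by
      apply Finset.card_le_card_of_injOn (fun i => x i ∩ I)
      · intro i _
        simp only [Finset.mem_coe, Finset.mem_powersetCard]
        exact ⟨Finset.inter_subset_right, hfcard i⟩
      · intro i _ j _ h; exact hfinj h
    rwa [Finset.card_powersetCard, hIcard, Finset.card_univ, ZMod.card] at hle
  have h5g : 5 ≤ Nat.choose 4 (m + 1) := by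
    have hle : (Finset.univ : Finset (ZMod 5)).card ≤ (I.powersetCard (m + 1)).card := by
      apply Finset.card_le_card_of_injOn (fun i => y i ∩ I)
      · intro i _
        simp only [Finset.mem_coe, Finset.mem_powersetCard]
        exact ⟨Finset.inter_subset_right, hgcard i⟩
      · intro i _ j _ h; exact hginj h
    rwa [Finset.card_powersetCard, hIcard, Finset.card_univ, ZMod.card] at hle
  have hm4 : m ≤ 4 := by
    have := Finset.card_le_card ((Finset.inter_subset_right : x 0 ∩ I ⊆ I))
    rwa [hIcard] at this
  interval_cases m <;> revert h5f h5g <;> decide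
end

section
/- Let C = x_1, y_1, ..., x_5, y_5, x_1 be a 10-cycle in Q_n alternating between levels k and k+1 with y_i = x_i ∪ x_{i+1} (indices mod 5), and let I(C) be the set of coordinates where some consecutive x_i, x_{i+1} differ. Then |I(C)| = 5, and in the 5×5 matrix A whose i-th row is x_i restricted to I(C), the 1's in each column occur in (cyclically) consecutive rows. -/
def Parc (p : ZMod 5 → Bool) : Prop :=
  (∀ i, ¬(p i = true ∧ p (i+1) = false ∧ p (i+2) = true)) →
    (∃ i, p i ≠ p (i+1)) →
    ∃ (s : ZMod 5) (l : Fin 5), ∀ i, p i = true ↔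
      ∃ t : Fin 5, t.val < l.val ∧ i = s + (t.val : ZMod 5)

instance : DecidablePred Parc := fun p => by unfold Parc; infer_instance

lemma arc_lemma : ∀ p, Parc p := by decide

def Pbd (p : ZMod 5 → Bool) : Prop :=
  (∀ i, ¬(p i = true ∧ p (i+1) = false ∧ p (i+2) = true)) →
    (∃ i, p i ≠ p (i+1)) →
    (Finset.univ.filter (fun i : ZMod 5 => p i ≠ p (i+1))).card = 2

instance : DecidablePred Pbd := fun p => by unfold Pbd; infer_instance

lemma boundary_lemma : ∀ p, Pbd p := by decide

/-- For a 10-cycle `x₁,y₁,…,x₅,y₅` in `Q_n` alternating between levels `k` and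
`k+1` with `yᵢ = xᵢ ∪ xᵢ₊₁`, the set `I(C)` of coordinates where some two
consecutive `xᵢ` differ has exactly 5 elements, and in the associated `5 × 5`
matrix (rows = restrictions of the `xᵢ` to `I(C)`) the 1's of every column
occur in cyclically consecutive rows. -/
theorem stmt7 (n k : ℕ) (x y : ZMod 5 → Finset (Fin n))
    (hxinj : Function.Injective x)
    (hxcard : ∀ i, (x i).card = k)
    (hy : ∀ i, y i = x i ∪ x (i + 1))
    (hycard : ∀ i, (y i).card = k + 1)
    (hyinj : Function.Injective y) :
    {a : Fin n | ∃ i : ZMod 5,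
        (a ∈ x i ∧ a ∉ x (i + 1)) ∨ (a ∉ x i ∧ a ∈ x (i + 1))}.ncard = 5 ∧
    ∀ a : Fin n,
      (∃ i : ZMod 5, (a ∈ x i ∧ a ∉ x (i + 1)) ∨ (a ∉ x i ∧ a ∈ x (i + 1))) →
      ∃ (s : ZMod 5) (l : ℕ),
        {i : ZMod 5 | a ∈ x i} = {i : ZMod 5 | ∃ t : ℕ, t < l ∧ i = s + (t : ZMod 5)} := by
  have hsd : ∀ i : ZMod 5, (x i \ x (i+1)).card = 1 ∧ (x (i+1) \ x i).card = 1 := by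
    intro i
    have h1 := Finset.card_sdiff_add_card (x i) (x (i+1))
    have h2 := Finset.card_sdiff_add_card (x (i+1)) (x i)
    have hu : (x i ∪ x (i+1)).card = k + 1 := by rw [← hy i]; exact hycard i
    have hu' : (x (i+1) ∪ x i).card = k + 1 := by rw [Finset.union_comm]; exact hu
    have hk1 := hxcard i
    have hk2 := hxcard (i+1)
    omega
  -- no coordinate has pattern ∈, ∉, ∈ at three consecutive indices
  have hgap : ∀ (a : Fin n) (i : ZMod 5), a ∈ x i → a ∉ x (i+1) → a ∈ x (i+2) → False := by
    intro a i h0 h1 h2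
    have e1 : x i \ x (i + 1) = {a} := by
      refine Finset.eq_singleton_iff_unique_mem.mpr ⟨Finset.mem_sdiff.mpr ⟨h0, h1⟩, ?_⟩
      intro b hb
      exact Finset.card_le_one.mp (le_of_eq (hsd i).1) b hb a (Finset.mem_sdiff.mpr ⟨h0, h1⟩)
    have h12 : i + 1 + 1 = i + 2 := by ring
    have e2 : x (i + 2) \ x (i + 1) = {a} := by
      have hc := (hsd (i+1)).2
      rw [h12] at hc
      refine Finset.eq_singleton_iff_unique_mem.mpr ⟨Finset.mem_sdiff.mpr ⟨h2, h1⟩, ?_⟩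
      intro b hb
      exact Finset.card_le_one.mp (le_of_eq hc) b hb a (Finset.mem_sdiff.mpr ⟨h2, h1⟩)
    have hyy : y i = y (i + 1) := by
      rw [hy i, hy (i+1), h12, Finset.union_comm (x i),
        ← Finset.union_sdiff_self_eq_union, e1,
        ← Finset.union_sdiff_self_eq_union (s := x (i+1)) (t := x (i+2)), e2]
    exact absurd (by simpa using hyinj hyy) (by decide : ¬ (1 : ZMod 5) = 0)
  have hnogap : ∀ a : Fin n, ∀ i : ZMod 5,
      ¬(decide (a ∈ x i) = true ∧ decide (a ∈ x (i+1)) = false ∧ decide (a ∈ x (i+2)) = true) := by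
    rintro a i ⟨h0, h1, h2⟩
    exact hgap a i (of_decide_eq_true h0) (of_decide_eq_false h1) (of_decide_eq_true h2)
  constructor
  · -- cardinality part
    have hset : {a : Fin n | ∃ i : ZMod 5, (a ∈ x i ∧ a ∉ x (i + 1)) ∨ (a ∉ x i ∧ a ∈ x (i + 1))}
        = ↑(Finset.univ.filter (fun a : Fin n => ∃ i : ZMod 5,
            (a ∈ x i ∧ a ∉ x (i + 1)) ∨ (a ∉ x i ∧ a ∈ x (i + 1)))) := by
      ext a; simp
    rw [hset, Set.ncard_coe_finset]
    set T : Finset (Fin n) := Finset.univ.filter (fun a : Fin n => ∃ i : ZMod 5,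
        (a ∈ x i ∧ a ∉ x (i + 1)) ∨ (a ∉ x i ∧ a ∈ x (i + 1))) with hT
    have hcard2 : ∀ a ∈ T, (Finset.univ.filter
        (fun i : ZMod 5 => decide (a ∈ x i) ≠ decide (a ∈ x (i+1)))).card = 2 := by
      intro a ha
      have hb := boundary_lemma (fun i => decide (a ∈ x i))
      unfold Pbd at hb
      apply hb (hnogap a)
      simp only [hT, Finset.mem_filter] at ha
      obtain ⟨-, i0, hi0⟩ := ha
      exact ⟨i0, by rcases hi0 with ⟨h1, h2⟩ | ⟨h1, h2⟩ <;> simp [h1, h2]⟩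
    have hzero : ∀ a : Fin n, a ∉ T → (Finset.univ.filter
        (fun i : ZMod 5 => decide (a ∈ x i) ≠ decide (a ∈ x (i+1)))).card = 0 := by
      intro a ha
      rw [Finset.card_eq_zero, Finset.filter_eq_empty_iff]
      intro i _
      intro hne
      apply ha
      simp only [hT, Finset.mem_filter, Finset.mem_univ, true_and]
      refine ⟨i, ?_⟩
      by_cases h1 : a ∈ x i <;> by_cases h2 : a ∈ x (i+1) <;> simp [h1, h2] at hne ⊢
    have hswap : ∑ a : Fin n, (Finset.univ.filter
          (fun i : ZMod 5 => decide (a ∈ x i) ≠ decide (a ∈ x (i+1)))).card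
        = ∑ i : ZMod 5, (Finset.univ.filter
          (fun a : Fin n => decide (a ∈ x i) ≠ decide (a ∈ x (i+1)))).card := by
      simp_rw [Finset.card_filter]
      exact Finset.sum_comm
    have hcol : ∀ i : ZMod 5, (Finset.univ.filter
        (fun a : Fin n => decide (a ∈ x i) ≠ decide (a ∈ x (i+1)))).card = 2 := by
      intro i
      have he : Finset.univ.filter (fun a : Fin n => decide (a ∈ x i) ≠ decide (a ∈ x (i+1)))
          = (x i \ x (i+1)) ∪ (x (i+1) \ x i) := by
        ext a
        by_cases h1 : a ∈ x i <;> by_cases h2 : a ∈ x (i+1) <;> simp [h1, h2]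
      rw [he, Finset.card_union_of_disjoint disjoint_sdiff_sdiff, (hsd i).1, (hsd i).2]
    have htot : ∑ a : Fin n, (Finset.univ.filter
        (fun i : ZMod 5 => decide (a ∈ x i) ≠ decide (a ∈ x (i+1)))).card = 10 := by
      rw [hswap, Finset.sum_congr rfl (fun i _ => hcol i)]
      decide
    have hTtot : ∑ a ∈ T, (Finset.univ.filter
        (fun i : ZMod 5 => decide (a ∈ x i) ≠ decide (a ∈ x (i+1)))).card = 10 := by
      rw [← htot]
      exact Finset.sum_subset (Finset.subset_univ T) (fun a _ ha => hzero a ha)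
    have h3 : ∑ a ∈ T, (Finset.univ.filter
        (fun i : ZMod 5 => decide (a ∈ x i) ≠ decide (a ∈ x (i+1)))).card = 2 * T.card := by
      rw [Finset.sum_congr rfl hcard2]
      simp [mul_comm]
    omega
  · -- arc part
    rintro a ⟨i0, hi0⟩
    have hdiff : ∃ i : ZMod 5, decide (a ∈ x i) ≠ decide (a ∈ x (i+1)) :=
      ⟨i0, by rcases hi0 with ⟨h1, h2⟩ | ⟨h1, h2⟩ <;> simp [h1, h2]⟩
    have harc := arc_lemma (fun i => decide (a ∈ x i))
    unfold Parc at harc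
    obtain ⟨s, l, hsl⟩ := harc (hnogap a) hdiff
    refine ⟨s, l.val, ?_⟩
    ext i
    simp only [Set.mem_setOf_eq]
    constructor
    · intro h
      obtain ⟨t, ht, he⟩ := (hsl i).mp (decide_eq_true h)
      exact ⟨t.val, ht, he⟩
    · rintro ⟨t, ht, rfl⟩
      have hl5 : t < 5 := by have := l.isLt; omega
      have := (hsl (s + (t : ZMod 5))).mpr ⟨⟨t, hl5⟩, by simpa using ht, by simp⟩
      exact of_decide_eq_true this
end

section
/- Let C = x_1, y_1, ..., x_5, y_5, x_1 be an induced monochromatic (under coloring c) 10-cycle in Q_n alternating between levels k and k+1, with A = A(C) the associated 5×5 matrix of restrictions of the x_i to I(C). Then each row of A contains exactly two 1's. -/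
/-- The color of the upward edge from the set `x` to `x ∪ {j}` (with `j ∉ x`):
parity of the level `|x|` together with parity of the weight of the common
prefix, i.e. the number of elements of `x` below `j`. -/
def ecolS {n : ℕ} (x : Finset (Fin n)) (j : Fin n) : ℕ × ℕ :=
  (x.card % 2, (x.filter fun a => a < j).card % 2)

private lemma zmod5_cases : ∀ d : ZMod 5, d = 0 ∨ d = 1 ∨ d = 2 ∨ d = 3 ∨ d = 4 := by decide

private lemma const5 {α : Sort*} (f : ZMod 5 → α) (h : ∀ i, f (i+1) = f i) (i j : ZMod 5) :
    f i = f j := by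
  have e : i + (j - i) = j := by ring
  rcases zmod5_cases (j - i) with hd|hd|hd|hd|hd <;> rw [hd] at e <;> rw [← e]
  · rw [add_zero]
  · exact (h i).symm
  · rw [show i + 2 = i+1+1 by ring, h, h]
  · rw [show i + 3 = i+1+1+1 by ring, h, h, h]
  · rw [show i + 4 = i+1+1+1+1 by ring, h, h, h, h]

private lemma alt5 (ε : ZMod 5 → ZMod 2) (h : ∀ i, ε i + ε (i+1) = 1) : False := by
  have h0 := h 0; have h1 := h 1; have h2 := h 2; have h3 := h 3; have h4 := h 4
  rw [show (0:ZMod 5)+1 = 1 by decide] at h0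
  rw [show (1:ZMod 5)+1 = 2 by decide] at h1
  rw [show (2:ZMod 5)+1 = 3 by decide] at h2
  rw [show (3:ZMod 5)+1 = 4 by decide] at h3
  rw [show (4:ZMod 5)+1 = 0 by decide] at h4
  have key : ε 0 + ε 0 = 1 := by linear_combination h0 - h1 + h2 - h3 + h4
  have : ∀ a : ZMod 2, a + a ≠ 1 := by decide
  exact this _ key

/-- For an induced 10-cycle `x₁,y₁,…,x₅,y₅` in `Q_n` (alternating between
levels `k` and `k+1`, `yᵢ = xᵢ ∪ xᵢ₊₁`, no chord in `Q_n`) that is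
monochromatic under the coloring `c`, every row of the associated matrix
`A(C)` (the restriction of `xᵢ` to `I(C)`) contains exactly two 1's. -/
theorem stmt9 (n k : ℕ) (x y : ZMod 5 → Finset (Fin n))
    (hxinj : Function.Injective x)
    (hxcard : ∀ i, (x i).card = k)
    (hy : ∀ i, y i = x i ∪ x (i + 1))
    (hycard : ∀ i, (y i).card = k + 1)
    (hyinj : Function.Injective y)
    (hinduced : ∀ i j : ZMod 5, i ≠ j → i ≠ j + 1 → ¬ x i ⊆ y j)
    (hmono : ∃ co : ℕ × ℕ, ∀ i : ZMod 5,
      (∀ j ∈ y i, j ∉ x i → ecolS (x i) j = co) ∧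
      (∀ j ∈ y i, j ∉ x (i + 1) → ecolS (x (i + 1)) j = co)) :
    ∀ i : ZMod 5,
      {a : Fin n | (∃ i' : ZMod 5,
          (a ∈ x i' ∧ a ∉ x (i' + 1)) ∨ (a ∉ x i' ∧ a ∈ x (i' + 1))) ∧
        a ∈ x i}.ncard = 2 := by
  
  classical
  obtain ⟨co, hco⟩ := hmono
  -- singleton differences
  have hdiffs : ∀ i : ZMod 5, ∃ a, x i \ x (i + 1) = {a} := by
    intro i
    rw [← Finset.card_eq_one]
    have h1 := Finset.card_sdiff_add_card (x i) (x (i+1))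
    rw [← hy i, hycard i, hxcard (i+1)] at h1
    omega
  have hdifft : ∀ i : ZMod 5, ∃ a, x (i+1) \ x i = {a} := by
    intro i
    rw [← Finset.card_eq_one]
    have h1 := Finset.card_sdiff_add_card (x (i+1)) (x i)
    rw [Finset.union_comm, ← hy i, hycard i, hxcard i] at h1
    omega
  choose s hs using hdiffs
  choose t ht using hdifft
  have hsmem : ∀ i, s i ∈ x i ∧ s i ∉ x (i+1) := by
    intro i
    have : s i ∈ x i \ x (i+1) := by rw [hs i]; exact Finset.mem_singleton_self _
    exact Finset.mem_sdiff.mp this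
  have htmem : ∀ i, t i ∈ x (i+1) ∧ t i ∉ x i := by
    intro i
    have : t i ∈ x (i+1) \ x i := by rw [ht i]; exact Finset.mem_singleton_self _
    exact Finset.mem_sdiff.mp this
  have heqs : ∀ i a, a ∈ x i → a ∉ x (i+1) → a = s i := by
    intro i a h1 h2
    have : a ∈ x i \ x (i+1) := Finset.mem_sdiff.mpr ⟨h1, h2⟩
    rw [hs i, Finset.mem_singleton] at this; exact this
  have heqt : ∀ i a, a ∈ x (i+1) → a ∉ x i → a = t i := by
    intro i a h1 h2
    have : a ∈ x (i+1) \ x i := Finset.mem_sdiff.mpr ⟨h1, h2⟩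
    rw [ht i, Finset.mem_singleton] at this; exact this
  have hst : ∀ i, s i ≠ t i := by
    intro i h; exact (htmem i).2 (h ▸ (hsmem i).1)
  have hss : ∀ i, s i ≠ s (i+1) := by
    intro i h
    exact (hsmem i).2 (by rw [h]; exact (hsmem (i+1)).1)
  have hxy : ∀ i, insert (s i) (x (i+1)) = insert (t i) (x i) := by
    intro i; ext a
    simp only [Finset.mem_insert]
    constructor
    · rintro (rfl | h)
      · exact Or.inr (hsmem i).1
      · by_cases hx : a ∈ x i
        · exact Or.inr hx
        · exact Or.inl (heqt i a h hx)
    · rintro (rfl | h)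
      · exact Or.inr (htmem i).1
      · by_cases hx : a ∈ x (i+1)
        · exact Or.inr hx
        · exact Or.inl (heqs i a h hx)
  have hchar : ∀ i a, a ∈ x (i+1) ↔ (a = t i ∨ (a ∈ x i ∧ a ≠ s i)) := by
    intro i a
    constructor
    · intro h
      by_cases hx : a ∈ x i
      · exact Or.inr ⟨hx, fun e => (hsmem i).2 (e ▸ h)⟩
      · exact Or.inl (heqt i a h hx)
    · rintro (rfl | ⟨h1, h2⟩)
      · exact (htmem i).1
      · by_cases hx : a ∈ x (i+1)
        · exact hx
        · exact absurd (heqs i a h1 hx) h2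
  set I : Finset (Fin n) := Finset.univ.biUnion (fun i => {s i, t i}) with hIdef
  have hmemI : ∀ a, a ∈ I ↔ ∃ i, a = s i ∨ a = t i := by
    intro a; simp [hIdef]
  have hsI : ∀ i, s i ∈ I := fun i => (hmemI _).mpr ⟨i, Or.inl rfl⟩
  have htI : ∀ i, t i ∈ I := fun i => (hmemI _).mpr ⟨i, Or.inr rfl⟩
  -- membership is constant outside I
  have hxconst : ∀ a, a ∉ I → ∀ j j', a ∈ x j → a ∈ x j' := by
    intro a ha j j' h
    have hne : ∀ i, a ≠ s i ∧ a ≠ t i := by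
      intro i
      constructor
      · intro e; exact ha ((hmemI a).mpr ⟨i, Or.inl e⟩)
      · intro e; exact ha ((hmemI a).mpr ⟨i, Or.inr e⟩)
    have step : ∀ i, (a ∈ x (i+1)) = (a ∈ x i) := by
      intro i; apply propext
      rw [hchar i a]
      constructor
      · rintro (rfl | ⟨h1, _⟩)
        · exact absurd rfl (hne i).2
        · exact h1
      · intro h1; exact Or.inr ⟨h1, (hne i).1⟩
    exact Eq.mp (const5 (fun i => (a ∈ x i : Prop)) step j j') h
  -- every element of I is an s-value
  have hIs : ∀ a ∈ I, ∃ i, a = s i := by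
    intro a ha
    rcases (hmemI a).mp ha with ⟨i, rfl | rfl⟩
    · exact ⟨i, rfl⟩
    · by_contra hc
      push_neg at hc
      have step : ∀ j, t i ∈ x j → t i ∈ x (j+1) := by
        intro j hj
        rw [hchar j]
        by_cases h' : t i = t j
        · exact Or.inl h'
        · exact Or.inr ⟨hj, hc j⟩
      have h5 : t i ∈ x (i+1+1+1+1+1) :=
        step _ (step _ (step _ (step _ (htmem i).1)))
      have hp5 : ∀ j : ZMod 5, j+1+1+1+1+1 = j := by decide
      rw [hp5 i] at h5
      exact (htmem i).2 h5
  set A : ZMod 5 → Finset (Fin n) := fun i => x i ∩ I with hAdef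
  set B : ZMod 5 → Finset (Fin n) := fun i => I \ x i with hBdef
  have hsA : ∀ i, s i ∈ A i := fun i => Finset.mem_inter.mpr ⟨(hsmem i).1, hsI i⟩
  have htB : ∀ i, t i ∈ B i := fun i => Finset.mem_sdiff.mpr ⟨htI i, (htmem i).2⟩
  have hBstep : ∀ i, B (i+1) = insert (s i) ((B i).erase (t i)) := by
    intro i; ext a
    constructor
    · intro h
      obtain ⟨haI, hnx⟩ := Finset.mem_sdiff.mp h
      by_cases hax : a ∈ x i
      · exact Finset.mem_insert.mpr (Or.inl (heqs i a hax hnx))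
      · refine Finset.mem_insert.mpr (Or.inr (Finset.mem_erase.mpr ⟨?_, Finset.mem_sdiff.mpr ⟨haI, hax⟩⟩))
        intro e; exact hnx (e ▸ (htmem i).1)
    · intro h
      rcases Finset.mem_insert.mp h with rfl | h'
      · exact Finset.mem_sdiff.mpr ⟨hsI i, (hsmem i).2⟩
      · obtain ⟨hne, hB'⟩ := Finset.mem_erase.mp h'
        obtain ⟨haI, hax⟩ := Finset.mem_sdiff.mp hB'
        refine Finset.mem_sdiff.mpr ⟨haI, fun hc => ?_⟩
        rcases (hchar i a).mp hc with e | ⟨h1, _⟩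
        · exact hne e
        · exact hax h1
  have hBcard : ∀ i, (B (i+1)).card = (B i).card := by
    intro i
    rw [hBstep i, Finset.card_insert_of_notMem, Finset.card_erase_of_mem (htB i)]
    · exact Nat.sub_add_cancel (Finset.card_pos.mpr ⟨t i, htB i⟩)
    · intro hmem
      exact (Finset.mem_sdiff.mp (Finset.mem_erase.mp hmem).2).2 (hsmem i).1
  have hBc : ∀ i, (B i).card = (B 0).card :=
    fun i => const5 (fun i => (B i).card) hBcard i 0
  have hsumI : ∀ i, (A i).card + (B i).card = I.card := by
    intro i
    have h1 : A i ⊆ I := Finset.inter_subset_right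
    have h2 : I \ A i = B i := by
      ext a
      simp only [hAdef, hBdef, Finset.mem_sdiff, Finset.mem_inter]
      tauto
    have h3 := Finset.card_sdiff_add_card_eq_card h1
    rw [h2] at h3; omega
  have hAc : ∀ i, (A i).card = (A 0).card := by
    intro i
    have := hsumI i; have := hsumI 0; have := hBc i
    omega
  have hI5 : I.card ≤ 5 := by
    have hsub : I ⊆ Finset.univ.image s := by
      intro a ha
      rcases hIs a ha with ⟨i, rfl⟩
      exact Finset.mem_image.mpr ⟨i, Finset.mem_univ _, rfl⟩
    calc I.card ≤ (Finset.univ.image s).card := Finset.card_le_card hsub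
      _ ≤ (Finset.univ : Finset (ZMod 5)).card := Finset.card_image_le
      _ = 5 := by decide
  -- inducedness helper
  have hInd : ∀ j j', j' ≠ j → j' ≠ j + 1 → ¬ ((B j).erase (t j) ⊆ B j') := by
    intro j j' h1 h2 hsub
    apply hinduced j' j h1 h2
    intro a haj'
    rw [hy j, Finset.mem_union]
    by_cases haI : a ∈ I
    · by_cases hax : a ∈ x j
      · exact Or.inl hax
      · by_cases hat : a = t j
        · exact Or.inr (hat ▸ (htmem j).1)
        · have hb : a ∈ (B j).erase (t j) :=
            Finset.mem_erase.mpr ⟨hat, Finset.mem_sdiff.mpr ⟨haI, hax⟩⟩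
          exact absurd haj' (Finset.mem_sdiff.mp (hsub hb)).2
    · exact Or.inl (hxconst a haI j' j haj')
  have hbne1 : (B 0).card ≠ 1 := by
    intro hb
    have hcard1 : (B 0).card = 1 := hb
    have hB0 : B 0 = {t 0} := by
      rcases Finset.card_eq_one.mp hcard1 with ⟨a, ha⟩
      have := htB 0
      rw [ha, Finset.mem_singleton] at this
      rw [ha, this]
    have : (B 0).erase (t 0) ⊆ B 2 := by
      rw [hB0, Finset.erase_singleton]
      exact Finset.empty_subset _
    exact hInd 0 2 (by decide) (by decide) this
  -- parity machinery
  set pr : Finset (Fin n) → Fin n → ZMod 2 :=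
    fun z e => (((z.filter (fun a => a < e)).card : ℕ) : ZMod 2) with hprdef
  set dd : Fin n → Fin n → ZMod 2 := fun a e => if a < e then 1 else 0 with hddef
  have htwo : ∀ a : ZMod 2, a + a = 0 := by decide
  have hprin : ∀ (z : Finset (Fin n)) a e, a ∉ z → pr (insert a z) e = pr z e + dd a e := by
    intro z a e ha
    simp only [hprdef, hddef]
    rw [Finset.filter_insert]
    by_cases h : a < e
    · rw [if_pos h, if_pos h,
        Finset.card_insert_of_notMem (fun hm => ha (Finset.mem_filter.mp hm).1)]
      push_cast; ring
    · rw [if_neg h, if_neg h, add_zero]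
  have hstepπ : ∀ i e, pr (x (i+1)) e + dd (s i) e = pr (x i) e + dd (t i) e := by
    intro i e
    rw [← hprin (x (i+1)) (s i) e (hsmem i).2, ← hprin (x i) (t i) e (htmem i).2, hxy i]
  have hd0 : ∀ a, dd a a = 0 := by
    intro a; simp [hddef]
  have hd1 : ∀ a b, a ≠ b → dd a b + dd b a = 1 := by
    intro a b hab
    rcases lt_trichotomy a b with h|h|h
    · simp only [hddef]; rw [if_pos h, if_neg (asymm h)]; norm_num
    · exact absurd h hab
    · simp only [hddef]; rw [if_neg (asymm h), if_pos h]; norm_num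
  set c : ZMod 2 := ((co.2 : ℕ) : ZMod 2) with hcdef
  have hP1 : ∀ i, pr (x i) (t i) = c := by
    intro i
    have h1 : ecolS (x i) (t i) = co :=
      (hco i).1 (t i) (by rw [hy i]; exact Finset.mem_union_right _ (htmem i).1) (htmem i).2
    have h2 : (Finset.filter (fun a => a < t i) (x i)).card % 2 = co.2 := congrArg Prod.snd h1
    simp only [hprdef, hcdef]
    rw [← ZMod.natCast_mod ((Finset.filter (fun a => a < t i) (x i)).card) 2, h2]
  have hP2' : ∀ i, pr (x (i+1)) (s i) = c := by
    intro i
    have h1 : ecolS (x (i+1)) (s i) = co :=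
      (hco i).2 (s i) (by rw [hy i]; exact Finset.mem_union_left _ (hsmem i).1) (hsmem i).2
    have h2 : (Finset.filter (fun a => a < s i) (x (i+1))).card % 2 = co.2 := congrArg Prod.snd h1
    simp only [hprdef, hcdef]
    rw [← ZMod.natCast_mod ((Finset.filter (fun a => a < s i) (x (i+1))).card) 2, h2]
  have hP2 : ∀ i, pr (x i) (s i) = c + dd (t i) (s i) := by
    intro i
    have h := hstepπ i (s i)
    rw [hP2' i, hd0 (s i), add_zero] at h
    linear_combination - h - htwo (dd (t i) (s i))
  -- row weight ≠ 1
  have hwne1 : (A 0).card ≠ 1 := by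
    intro hw
    have hAi : ∀ i, A i = {s i} := by
      intro i
      have hci : (A i).card = 1 := by rw [hAc i, hw]
      rcases Finset.card_eq_one.mp hci with ⟨a, ha⟩
      have := hsA i
      rw [ha, Finset.mem_singleton] at this
      rw [ha, this]
    have hts : ∀ i, t i = s (i+1) := by
      intro i
      have h1 : t i ∈ A (i+1) := Finset.mem_inter.mpr ⟨(htmem i).1, htI i⟩
      rw [hAi (i+1), Finset.mem_singleton] at h1
      exact h1
    have hkey : ∀ i, dd (s i) (s (i+1)) + dd (s (i+1)) (s (i+1+1)) = 1 := by
      intro i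
      have e1 : pr (x i) (s (i+1)) = c := by rw [← hts i]; exact hP1 i
      have e2 := hstepπ i (s (i+1))
      rw [hts i, hd0] at e2
      have e3 := hP2 (i+1)
      rw [hts (i+1)] at e3
      have e4 := hd1 (s (i+1)) (s (i+1+1)) (hss (i+1))
      linear_combination e2 - e3 + e1 + e4 - htwo (dd (s (i+1+1)) (s (i+1)))
    exact absurd hkey (by intro hk; exact alt5 (fun j => dd (s j) (s (j+1))) hk)
  -- bounds
  have hw1 : 1 ≤ (A 0).card := Finset.card_pos.mpr ⟨s 0, hsA 0⟩
  have hb1 : 1 ≤ (B 0).card := Finset.card_pos.mpr ⟨t 0, htB 0⟩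
  have hw23 : (A 0).card = 2 ∨ (A 0).card = 3 := by
    have := hsumI 0; omega
  have hwne3 : (A 0).card ≠ 3 := by
    intro hw3
    have hb2 : ∀ i, (B i).card = 2 := by
      intro i
      rw [hBc i]
      have := hsumI 0; omega
    have huex : ∀ i, ∃ a, (B i).erase (t i) = {a} := by
      intro i
      rw [← Finset.card_eq_one, Finset.card_erase_of_mem (htB i), hb2 i]
    choose u huu using huex
    have huE : ∀ i, u i ∈ (B i).erase (t i) := by
      intro i; rw [huu i]; exact Finset.mem_singleton_self _
    have huB : ∀ i, u i ∈ B i := fun i => (Finset.mem_erase.mp (huE i)).2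
    have hus : ∀ i, s i ≠ u i := by
      intro i h
      exact (Finset.mem_sdiff.mp (huB i)).2 (h ▸ (hsmem i).1)
    have hBi1 : ∀ i, B (i+1) = insert (s i) {u i} := by
      intro i; rw [hBstep i, huu i]
    have hd3 : ∀ i : ZMod 5, i ≠ i + 1 := by decide
    have hd4 : ∀ i : ZMod 5, i ≠ i + 1 + 1 := by decide
    have ht1 : ∀ i, t (i+1) = u i := by
      intro i
      have hmem : t (i+1) ∈ insert (s i) ({u i} : Finset (Fin n)) := by rw [← hBi1 i]; exact htB (i+1)
      rcases Finset.mem_insert.mp hmem with h | h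
      · exfalso
        apply hInd (i+1) i (hd3 i) (hd4 i)
        rw [hBi1 i, h, Finset.erase_insert (fun hm => hus i (Finset.mem_singleton.mp hm))]
        exact Finset.singleton_subset_iff.mpr (huB i)
      · exact Finset.mem_singleton.mp h
    have hu1 : ∀ i, u (i+1) = s i := by
      intro i
      have h1 : ({u (i+1)} : Finset (Fin n)) = {s i} := by
        rw [← huu (i+1), hBi1 i, ht1 i, Finset.erase_insert_of_ne (hus i),
          Finset.erase_singleton, insert_empty_eq]
      simpa using h1
    have ht2 : ∀ i, t (i+2) = s i := by
      intro i
      rw [show i+2 = i+1+1 by ring, ht1 (i+1), hu1 i]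
    have hz32 : ∀ i : ZMod 5, i+3+2 = i := by decide
    have hts3 : ∀ i, t i = s (i+3) := by
      intro i
      have := ht2 (i+3)
      rw [hz32 i] at this
      exact this
    set g : ZMod 5 → Fin n → ZMod 2 :=
      fun i e => pr (x i) e + dd (s (i+3)) e + dd (s (i+4)) e with hgdef
    have hz13 : ∀ i : ZMod 5, i+1+3 = i+4 := by decide
    have hz14 : ∀ i : ZMod 5, i+1+4 = i := by decide
    have hgstep : ∀ i, g (i+1) = g i := by
      intro i; funext e
      simp only [hgdef]
      rw [hz13 i, hz14 i]
      have h := hstepπ i e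
      rw [hts3 i] at h
      linear_combination h
    have hgconst := const5 g hgstep
    have cond2 : ∀ i, g i (s i) = c + dd (s (i+4)) (s i) := by
      intro i
      simp only [hgdef]
      have h := hP2 i
      rw [hts3 i] at h
      rw [h]
      linear_combination htwo (dd (s (i+3)) (s i))
    have hz23 : ∀ i : ZMod 5, i+2+3 = i := by decide
    have hz24 : ∀ i : ZMod 5, i+2+4 = i+1 := by decide
    have cond1 : ∀ i, g (i+2) (s i) = c + dd (s (i+1)) (s i) := by
      intro i
      simp only [hgdef]
      rw [hz23 i, hz24 i]
      have h := hP1 (i+2)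
      rw [hts3 (i+2), hz23 i] at h
      rw [h, hd0]
      ring
    have hrel : ∀ i, dd (s (i+1)) (s i) = dd (s (i+4)) (s i) := by
      intro i
      have h1 := cond1 i
      have h2 := cond2 i
      rw [hgconst (i+2) i, h2] at h1
      linear_combination - h1
    have hz41 : ∀ i : ZMod 5, i+4+1 = i := by decide
    have hz141 : ∀ i : ZMod 5, i+1+4 = i := by decide
    have hkey : ∀ j, dd (s j) (s (j+1)) + dd (s (j+1)) (s (j+1+1)) = 1 := by
      intro j
      have h1 := hrel (j+1)
      rw [hz141 j] at h1
      have h2 := hd1 (s (j+1)) (s (j+1+1)) (hss (j+1))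
      linear_combination h2 + h1 + htwo (dd (s j) (s (j+1))) - htwo (dd (s (j+1+1)) (s (j+1)))
    exact alt5 (fun j => dd (s j) (s (j+1))) hkey
  have hw2 : (A 0).card = 2 := by omega
  -- final goal
  intro i
  have hgoal : {a : Fin n | (∃ i' : ZMod 5,
      (a ∈ x i' ∧ a ∉ x (i' + 1)) ∨ (a ∉ x i' ∧ a ∈ x (i' + 1))) ∧ a ∈ x i}
      = ↑(x i ∩ I) := by
    ext a
    simp only [Set.mem_setOf_eq, Finset.coe_inter, Set.mem_inter_iff, Finset.mem_coe]
    constructor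
    · rintro ⟨⟨i', h⟩, hx⟩
      refine ⟨hx, (hmemI a).mpr ⟨i', ?_⟩⟩
      rcases h with ⟨h1, h2⟩ | ⟨h1, h2⟩
      · exact Or.inl (heqs i' a h1 h2)
      · exact Or.inr (heqt i' a h2 h1)
    · rintro ⟨hx, haI⟩
      refine ⟨?_, hx⟩
      rcases (hmemI a).mp haI with ⟨i', rfl | rfl⟩
      · exact ⟨i', Or.inl ⟨(hsmem i').1, (hsmem i').2⟩⟩
      · exact ⟨i', Or.inr ⟨(htmem i').2, (htmem i').1⟩⟩
  rw [hgoal, Set.ncard_coe_finset]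
  have : x i ∩ I = A i := rfl
  rw [this, hAc i, hw2]
end

section
/- Let C = x_1, y_1, ..., x_5, y_5, x_1 be a 10-cycle in Q_n alternating between levels k and k+1 with y_i = x_i ∪ x_{i+1}, all x_i distinct and all y_i distinct. If there are three indices i_1, i_2, i_3 and two coordinates j_1, j_2 ∈ I(C) such that x_{i_1}, x_{i_2}, x_{i_3} all have 0 in coordinates j_1 and j_2 (as entries of the matrix A(C)), then C has a chord in Q_n, i.e., C is not an induced cycle. -/
private lemma pick5 : ∀ i₁ i₂ i₃ : ZMod 5, i₁ ≠ i₂ → i₁ ≠ i₃ → i₂ ≠ i₃ →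
    ∃ a c : ZMod 5, (a = i₁ ∨ a = i₂ ∨ a = i₃) ∧ (a + 1 = i₁ ∨ a + 1 = i₂ ∨ a + 1 = i₃) ∧
      (c = i₁ ∨ c = i₂ ∨ c = i₃) ∧ c ≠ a ∧ c ≠ a + 1 := by decide

/-- For a 10-cycle `x₁,y₁,…,x₅,y₅` in `Q_n` (alternating between levels `k` and
`k+1`, `yᵢ = xᵢ ∪ xᵢ₊₁`, with `|I(C)| = 5` and each row of `A(C)` having exactly
two 1's), if three rows of `A(C)` have 0's in the same two columns `j₁ ≠ j₂`,
then `C` has a chord in `Q_n`, i.e. `C` is not induced. -/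
theorem stmt10 (n k : ℕ) (x y : ZMod 5 → Finset (Fin n))
    (hxinj : Function.Injective x)
    (hxcard : ∀ i, (x i).card = k)
    (hy : ∀ i, y i = x i ∪ x (i + 1))
    (hycard : ∀ i, (y i).card = k + 1)
    (hyinj : Function.Injective y)
    (hI5 : {a : Fin n | ∃ i : ZMod 5,
        (a ∈ x i ∧ a ∉ x (i + 1)) ∨ (a ∉ x i ∧ a ∈ x (i + 1))}.ncard = 5)
    (hrows : ∀ i : ZMod 5,
      {a : Fin n | (∃ i' : ZMod 5,
          (a ∈ x i' ∧ a ∉ x (i' + 1)) ∨ (a ∉ x i' ∧ a ∈ x (i' + 1))) ∧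
        a ∈ x i}.ncard = 2)
    (j₁ j₂ : Fin n) (hj : j₁ ≠ j₂)
    (hj₁ : ∃ i : ZMod 5, (j₁ ∈ x i ∧ j₁ ∉ x (i + 1)) ∨ (j₁ ∉ x i ∧ j₁ ∈ x (i + 1)))
    (hj₂ : ∃ i : ZMod 5, (j₂ ∈ x i ∧ j₂ ∉ x (i + 1)) ∨ (j₂ ∉ x i ∧ j₂ ∈ x (i + 1)))
    (i₁ i₂ i₃ : ZMod 5) (h12 : i₁ ≠ i₂) (h13 : i₁ ≠ i₃) (h23 : i₂ ≠ i₃)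
    (hz : ∀ i ∈ ({i₁, i₂, i₃} : Set (ZMod 5)), j₁ ∉ x i ∧ j₂ ∉ x i) :
    ∃ i j : ZMod 5, i ≠ j ∧ i ≠ j + 1 ∧ x i ⊆ y j := by
  classical
  set I : Set (Fin n) := {a : Fin n | ∃ i : ZMod 5,
      (a ∈ x i ∧ a ∉ x (i + 1)) ∨ (a ∉ x i ∧ a ∈ x (i + 1))} with hIdef
  set R : ZMod 5 → Set (Fin n) := fun i => {a : Fin n | a ∈ I ∧ a ∈ x i} with hRdef
  have hrow : ∀ i, (R i).ncard = 2 := fun i => hrows i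
  -- membership outside I is constant along the cycle
  have hconst : ∀ a : Fin n, a ∉ I → ∀ i i' : ZMod 5, (a ∈ x i ↔ a ∈ x i') := by
    intro a ha
    have hstep : ∀ i : ZMod 5, (a ∈ x i ↔ a ∈ x (i + 1)) := by
      intro i
      by_contra h
      exact ha ⟨i, by tauto⟩
    have h0 := hstep 0; have h1 := hstep 1; have h2 := hstep 2
    have h3 := hstep 3; have h4 := hstep 4
    have e1 : (0 : ZMod 5) + 1 = 1 := by decide
    have e2 : (1 : ZMod 5) + 1 = 2 := by decide
    have e3 : (2 : ZMod 5) + 1 = 3 := by decide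
    have e4 : (3 : ZMod 5) + 1 = 4 := by decide
    have e5 : (4 : ZMod 5) + 1 = 0 := by decide
    rw [e1] at h0; rw [e2] at h1; rw [e3] at h2; rw [e4] at h3; rw [e5] at h4
    have hcases : ∀ i : ZMod 5, i = 0 ∨ i = 1 ∨ i = 2 ∨ i = 3 ∨ i = 4 := by decide
    have key : ∀ i : ZMod 5, (a ∈ x i ↔ a ∈ x 0) := by
      intro i
      rcases hcases i with rfl | rfl | rfl | rfl | rfl
      · exact Iff.rfl
      · exact h0.symm
      · exact (h0.trans h1).symm
      · exact ((h0.trans h1).trans h2).symm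
      · exact (((h0.trans h1).trans h2).trans h3).symm
    intro i i'
    exact (key i).trans (key i').symm
  -- rows in consecutive positions are distinct
  have hRne : ∀ a : ZMod 5, R a ≠ R (a + 1) := by
    intro a hEq
    have hxa : x a = x (a + 1) := by
      ext e
      by_cases heI : e ∈ I
      · constructor
        · intro he
          have : e ∈ R a := ⟨heI, he⟩
          rw [hEq] at this; exact this.2
        · intro he
          have : e ∈ R (a + 1) := ⟨heI, he⟩
          rw [← hEq] at this; exact this.2
      · exact hconst e heI a (a + 1)
    have := hxinj hxa
    have h1 : (1 : ZMod 5) = 0 := by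
      have := left_eq_add.mp this
      exact this
    exact absurd h1 (by decide)
  have hj₁I : j₁ ∈ I := hj₁
  have hj₂I : j₂ ∈ I := hj₂
  -- the complement T of the two columns inside I
  have hpairsub : ({j₁, j₂} : Set (Fin n)) ⊆ I := by
    rintro a (rfl | rfl)
    exacts [hj₁I, hj₂I]
  have hT : (I \ {j₁, j₂}).ncard = 3 := by
    rw [Set.ncard_diff hpairsub, Set.ncard_pair hj, hI5]
  -- rows of the three special indices avoid j₁, j₂
  have hRsub : ∀ i : ZMod 5, (i = i₁ ∨ i = i₂ ∨ i = i₃) → R i ⊆ I \ {j₁, j₂} := by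
    intro i hi e he
    have hzi := hz i (by rcases hi with rfl | rfl | rfl <;> simp)
    refine ⟨he.1, ?_⟩
    rintro (rfl | rfl)
    · exact hzi.1 he.2
    · exact hzi.2 he.2
  obtain ⟨a, c, haM, ha1M, hcM, hca, hca1⟩ := pick5 i₁ i₂ i₃ h12 h13 h23
  -- R a ∪ R (a+1) = T
  have hint : (R a ∩ R (a + 1)).ncard ≤ 1 := by
    by_contra h
    push_neg at h
    have hEq1 : R a ∩ R (a + 1) = R a := by
      apply Set.eq_of_subset_of_ncard_le Set.inter_subset_left
      rw [hrow a]; omega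
    have hEq2 : R a ∩ R (a + 1) = R (a + 1) := by
      apply Set.eq_of_subset_of_ncard_le Set.inter_subset_right
      rw [hrow (a + 1)]; omega
    exact hRne a (hEq1.symm.trans hEq2)
  have hcardun : 3 ≤ (R a ∪ R (a + 1)).ncard := by
    have h := Set.ncard_union_add_ncard_inter (R a) (R (a + 1))
    rw [hrow a, hrow (a + 1)] at h
    omega
  have hTeq : R a ∪ R (a + 1) = I \ {j₁, j₂} := by
    apply Set.eq_of_subset_of_ncard_le
    · exact Set.union_subset (hRsub a haM) (hRsub (a + 1) ha1M)
    · rw [hT]; exact hcardun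
    · exact Set.toFinite _
  -- conclude: x c ⊆ y a
  refine ⟨c, a, hca, hca1, ?_⟩
  rw [hy a]
  intro e he
  by_cases heI : e ∈ I
  · have heRc : e ∈ R c := ⟨heI, he⟩
    have heT : e ∈ I \ {j₁, j₂} := hRsub c hcM heRc
    rw [← hTeq] at heT
    rcases heT with h | h
    · exact Finset.mem_union_left _ h.2
    · exact Finset.mem_union_right _ h.2
  · exact Finset.mem_union_left _ ((hconst e heI c a).mp he)
end

section
/- Let G be a subgraph of Q_n with no cycle of length 4k+2, and let v be a vertex of Q_n. Define the graph H_v on the neighbors of v in Q_n, where u and w are adjacent in H_v iff there is a path u, x, w in G with x ≠ v. Then H_v contains no cycle of length 2k+1. -/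
open Finset

lemma ham_cast {n : ℕ} (x y : Fin n → Bool) :
    ((hammingDist x y : ℕ) : ZMod 2) = ∑ i, if x i ≠ y i then (1 : ZMod 2) else 0 := by
  unfold hammingDist
  rw [Finset.card_filter]
  push_cast [apply_ite (Nat.cast : ℕ → ZMod 2)]
  rfl

lemma ham_parity {n : ℕ} (a b c : Fin n → Bool) :
    hammingDist a c % 2 = (hammingDist a b + hammingDist b c) % 2 := by
  have : ((hammingDist a c : ZMod 2)) = ((hammingDist a b + hammingDist b c : ℕ) : ZMod 2) := by
    push_cast
    rw [ham_cast, ham_cast, ham_cast, ← Finset.sum_add_distrib]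
    apply Finset.sum_congr rfl
    intro i _
    rcases Bool.eq_false_or_eq_true (a i) with h1 | h1 <;>
    rcases Bool.eq_false_or_eq_true (b i) with h2 | h2 <;>
    rcases Bool.eq_false_or_eq_true (c i) with h3 | h3 <;> simp [h1, h2, h3] <;> decide
  exact (ZMod.natCast_eq_natCast_iff _ _ _).mp this

lemma diff_coord {n : ℕ} {z a : Fin n → Bool} (h : hammingDist z a = 1) :
    ∃ i, ∀ j, z j ≠ a j ↔ j = i := by
  obtain ⟨i, hi⟩ := Finset.card_eq_one.mp h
  refine ⟨i, fun j => ?_⟩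
  constructor
  · intro hj
    have : j ∈ (univ.filter fun p => z p ≠ a p) := by simp [hj]
    rw [hi] at this; simpa using this
  · intro hj
    have : i ∈ ({i} : Finset (Fin n)) := by simp
    rw [← hi] at this
    simp only [Finset.mem_filter] at this
    exact hj ▸ this.2

lemma bool_eq {x y w : Bool} (h1 : x ≠ y) (h2 : w ≠ y) : x = w := by
  revert h1 h2; revert x y w; decide

lemma common_det {n : ℕ} {a b z : Fin n → Bool} (hab : hammingDist a b = 2)
    {i : Fin n} (hi : ∀ j, z j ≠ a j ↔ j = i) (hz_b : hammingDist z b = 1) :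
    a i ≠ b i ∧ ∀ j, z j = if j = i then b j else a j := by
  have hmem : a i ≠ b i := by
    intro hcon
    have hiS : i ∉ univ.filter fun j => a j ≠ b j := by simp [hcon]
    have hsub : insert i (univ.filter fun j => a j ≠ b j) ⊆
        univ.filter fun j => z j ≠ b j := by
      intro j hj
      rcases Finset.mem_insert.mp hj with rfl | hj
      · simp only [Finset.mem_filter, Finset.mem_univ, true_and]
        rw [← hcon]; exact (hi j).mpr rfl
      · simp only [Finset.mem_filter, Finset.mem_univ, true_and] at hj ⊢
        have hji : j ≠ i := fun e => hj (e ▸ hcon)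
        have : z j = a j := by
          by_contra hne; exact hji ((hi j).mp hne)
        rw [this]; exact hj
    have h3 : (insert i (univ.filter fun j => a j ≠ b j)).card = 3 := by
      rw [Finset.card_insert_of_notMem hiS]; rw [show ((univ.filter fun j => a j ≠ b j).card) = 2 from hab]
    have h4 := Finset.card_le_card hsub
    rw [h3] at h4
    have h5 : 3 ≤ hammingDist z b := h4
    omega
  refine ⟨hmem, fun j => ?_⟩
  by_cases hj : j = i
  · subst hj
    simp only [if_pos rfl]
    exact bool_eq ((hi j).mpr rfl) (Ne.symm hmem)
  · simp only [if_neg hj]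
    by_contra hne; exact hj ((hi j).mp hne)

lemma three_common {n : ℕ} {a b z₁ z₂ z₃ : Fin n → Bool} (hab : hammingDist a b = 2)
    (h₁a : hammingDist z₁ a = 1) (h₁b : hammingDist z₁ b = 1)
    (h₂a : hammingDist z₂ a = 1) (h₂b : hammingDist z₂ b = 1)
    (h₃a : hammingDist z₃ a = 1) (h₃b : hammingDist z₃ b = 1)
    (d12 : z₁ ≠ z₂) (d13 : z₁ ≠ z₃) (d23 : z₂ ≠ z₃) : False := by
  obtain ⟨i₁, hi₁⟩ := diff_coord h₁a
  obtain ⟨i₂, hi₂⟩ := diff_coord h₂a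
  obtain ⟨i₃, hi₃⟩ := diff_coord h₃a
  obtain ⟨m₁, e₁⟩ := common_det hab hi₁ h₁b
  obtain ⟨m₂, e₂⟩ := common_det hab hi₂ h₂b
  obtain ⟨m₃, e₃⟩ := common_det hab hi₃ h₃b
  have distinct : i₁ ≠ i₂ ∧ i₁ ≠ i₃ ∧ i₂ ≠ i₃ := by
    refine ⟨?_, ?_, ?_⟩
    · intro e; exact d12 (funext fun j => by rw [e₁ j, e₂ j, e])
    · intro e; exact d13 (funext fun j => by rw [e₁ j, e₃ j, e])
    · intro e; exact d23 (funext fun j => by rw [e₂ j, e₃ j, e])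
  have hsub : ({i₁, i₂, i₃} : Finset (Fin n)) ⊆ univ.filter fun j => a j ≠ b j := by
    intro j hj
    simp only [Finset.mem_insert, Finset.mem_singleton] at hj
    rcases hj with rfl | rfl | rfl <;>
      simp only [Finset.mem_filter, Finset.mem_univ, true_and] <;> assumption
  have hc : ({i₁, i₂, i₃} : Finset (Fin n)).card = 3 := by
    rw [Finset.card_insert_of_notMem (by simp [distinct.1, distinct.2.1]),
      Finset.card_insert_of_notMem (by simp [distinct.2.2]), Finset.card_singleton]
  have h4 := Finset.card_le_card hsub
  rw [hc] at h4
  have h5 : 3 ≤ hammingDist a b := h4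
  omega

/-- Let `G` be a subgraph of `Q_n` with no cycle of length `4k+2` (`k ≥ 1`) and
let `v` be a vertex of `Q_n`. The auxiliary graph `H_v` on the `Q_n`-neighbors
of `v`, where `u ~ w` iff there is a path `u, x, w` in `G` with `x ≠ v`,
contains no cycle of length `2k+1`. -/
theorem stmt13 (n k : ℕ) (hk : 1 ≤ k) (G : SimpleGraph (Fin n → Bool))
    (hG : ∀ x y, G.Adj x y → hammingDist x y = 1)
    (hnocycle : ¬ ∃ v : ZMod (4 * k + 2) → (Fin n → Bool),
      Function.Injective v ∧ ∀ i, G.Adj (v i) (v (i + 1)))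
    (v : Fin n → Bool) :
    ¬ ∃ u : ZMod (2 * k + 1) → (Fin n → Bool),
      Function.Injective u ∧
      (∀ i, hammingDist (u i) v = 1) ∧
      (∀ i, ∃ x, x ≠ v ∧ G.Adj (u i) x ∧ G.Adj x (u (i + 1))) := by
  rintro ⟨u, hu_inj, hu_dist, hu_mid⟩
  choose x hxv hx1 hx2 using hu_mid
  haveI : NeZero (2 * k + 1) := ⟨by omega⟩
  haveI : NeZero (4 * k + 2) := ⟨by omega⟩
  haveI : Fact (1 < 2 * k + 1) := ⟨by omega⟩
  haveI : Fact (1 < 4 * k + 2) := ⟨by omega⟩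
  have key : ∀ m : ℕ, m < 2 * k + 1 → ((m : ZMod (2 * k + 1))).val = m := fun m hm => by
    rw [ZMod.val_natCast, Nat.mod_eq_of_lt hm]
  have hux : ∀ i, hammingDist (u i) (x i) = 1 := fun i => hG _ _ (hx1 i)
  have hxu' : ∀ i, hammingDist (x i) (u (i + 1)) = 1 := fun i => hG _ _ (hx2 i)
  have hxui : ∀ i, hammingDist (x i) (u i) = 1 := fun i => by
    rw [hammingDist_comm]; exact hux i
  have hx_dist : ∀ i, hammingDist (x i) v = 2 := by
    intro i
    have hp := ham_parity (x i) (u i) v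
    have ht := hammingDist_triangle (x i) (u i) v
    rw [hxui i, hu_dist i] at hp ht
    have h0 : hammingDist (x i) v ≠ 0 := fun h => hxv i (hammingDist_eq_zero.mp h)
    omega
  have hadd : ∀ i : ZMod (2 * k + 1), i ≠ i + 1 := by
    intro i h
    have h1 : (0 : ZMod (2 * k + 1)) = 1 := by
      have := congrArg (fun z => z - i) h
      simpa [sub_eq_iff_eq_add] using this
    have := congrArg ZMod.val h1
    rw [ZMod.val_zero, ZMod.val_one] at this
    omega
  have hx_ne_u : ∀ i j, x i ≠ u j := by
    intro i j h
    have h2 := hx_dist i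
    rw [h, hu_dist j] at h2
    omega
  have hx_inj : Function.Injective x := by
    intro i j hij
    by_contra hne
    have huii : u i ≠ u (i + 1) := fun h => hadd i (hu_inj h)
    have d2a : hammingDist (u (i + 1)) (x i) = 1 := by
      rw [hammingDist_comm]; exact hxu' i
    have d3a : hammingDist (u j) (x i) = 1 := by rw [hij]; exact hux j
    have d4a : hammingDist (u (j + 1)) (x i) = 1 := by
      rw [hij, hammingDist_comm]; exact hxu' j
    have hj1 : u j = u i ∨ u j = u (i + 1) := by
      by_contra hc; push_neg at hc
      exact three_common (hx_dist i) (hux i) (hu_dist i) d2a (hu_dist (i + 1))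
        d3a (hu_dist j) huii (Ne.symm hc.1) (Ne.symm hc.2)
    have hj2 : u (j + 1) = u i ∨ u (j + 1) = u (i + 1) := by
      by_contra hc; push_neg at hc
      exact three_common (hx_dist i) (hux i) (hu_dist i) d2a (hu_dist (i + 1))
        d4a (hu_dist (j + 1)) huii (Ne.symm hc.1) (Ne.symm hc.2)
    have e1 : j = i + 1 := by
      rcases hj1 with h | h
      · exact absurd (hu_inj h).symm hne
      · exact hu_inj h
    have e2 : j + 1 = i := by
      rcases hj2 with h | h
      · exact hu_inj h
      · exact absurd (add_right_cancel (hu_inj h) : j = i).symm hne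
    have e3 : i = i + 2 := by
      calc i = j + 1 := e2.symm
        _ = (i + 1) + 1 := by rw [e1]
        _ = i + 2 := by ring
    have e4 : (2 : ZMod (2 * k + 1)) = 0 := by
      have := congrArg (fun z => z - i) e3
      simpa using this.symm
    have e5 : (((2 : ℕ) : ZMod (2 * k + 1))).val = 2 := key 2 (by omega)
    rw [show (((2 : ℕ) : ZMod (2 * k + 1))) = (2 : ZMod (2 * k + 1)) by push_cast; rfl,
      e4, ZMod.val_zero] at e5
    omega
  apply hnocycle
  refine ⟨fun i => if i.val % 2 = 0 then u ((i.val / 2 : ℕ) : ZMod (2 * k + 1))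
    else x ((i.val / 2 : ℕ) : ZMod (2 * k + 1)), ?_, ?_⟩
  · intro i j h
    simp only at h
    have hvi : i.val < 4 * k + 2 := ZMod.val_lt i
    have hvj : j.val < 4 * k + 2 := ZMod.val_lt j
    have hdi : i.val / 2 < 2 * k + 1 := by omega
    have hdj : j.val / 2 < 2 * k + 1 := by omega
    by_cases hi2 : i.val % 2 = 0 <;> by_cases hj2 : j.val % 2 = 0
    · rw [if_pos hi2, if_pos hj2] at h
      have hv := congrArg ZMod.val (hu_inj h)
      rw [key _ hdi, key _ hdj] at hv
      exact ZMod.val_injective _ (by omega)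
    · rw [if_pos hi2, if_neg hj2] at h
      exact absurd h.symm (hx_ne_u _ _)
    · rw [if_neg hi2, if_pos hj2] at h
      exact absurd h (hx_ne_u _ _)
    · rw [if_neg hi2, if_neg hj2] at h
      have hv := congrArg ZMod.val (hx_inj h)
      rw [key _ hdi, key _ hdj] at hv
      exact ZMod.val_injective _ (by omega)
  · intro i
    simp only
    have hvi : i.val < 4 * k + 2 := ZMod.val_lt i
    have hsucc : (i + 1).val = (i.val + 1) % (4 * k + 2) := by
      rw [ZMod.val_add, ZMod.val_one]
    by_cases hlast : i.val = 4 * k + 1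
    · have h1 : (i + 1).val = 0 := by
        rw [hsucc, hlast, show 4 * k + 1 + 1 = 4 * k + 2 from rfl, Nat.mod_self]
      have h2 : i.val % 2 = 1 := by omega
      have h3 : i.val / 2 = 2 * k := by omega
      rw [if_neg (by omega), h1, h3]
      simp only [Nat.zero_mod, if_pos rfl]
      have e : ((2 * k : ℕ) : ZMod (2 * k + 1)) + 1 = 0 := by
        have h5 : ((2 * k + 1 : ℕ) : ZMod (2 * k + 1)) = 0 := ZMod.natCast_self _
        rwa [Nat.cast_add, Nat.cast_one] at h5
      rw [Nat.cast_zero, ← e]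
      exact hx2 _
    · have h1 : (i + 1).val = i.val + 1 := by
        rw [hsucc]; exact Nat.mod_eq_of_lt (by omega)
      by_cases hi2 : i.val % 2 = 0
      · have h2 : (i.val + 1) % 2 ≠ 0 := by omega
        have h3 : (i.val + 1) / 2 = i.val / 2 := by omega
        rw [if_pos hi2, h1, if_neg h2, h3]
        exact hx1 _
      · have h2 : (i.val + 1) % 2 = 0 := by omega
        have h3 : (i.val + 1) / 2 = i.val / 2 + 1 := by omega
        rw [if_neg hi2, h1, if_pos h2, h3, Nat.cast_add, Nat.cast_one]
        exact hx2 _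
end
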